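/- Let x : I × Ω → ℝ³ be a parametrised evolving surface, let F̂ : ℝ × ℝ³ → ℝ be continuously differentiable, and set f(t, ξ) := F̂(t, x(t, ξ)). Fix (t, ξ) ∈ I × Ω, write V := ∂ₜx(t, ξ), let N be a unit normal to the tangent plane span{∂₁x(t,ξ), ∂₂x(t,ξ)}, and let u = Σ_{i ∈ {1,2}} uⁱ ∂ᵢx(t, ξ) be a tangent vector. Then ∂ₜF̂(t, x(t,ξ)) + (∇ₓF̂(t, x(t,ξ)) · N)(V · N) + (P(t,ξ) ∇ₓF̂(t, x(t,ξ))) · (V + u) = ∂ₜf(t, ξ) + Σ_{i ∈ {1,2}} uⁱ ∂ᵢf(t, ξ). In particular, the generalised optical flow equation d_t^N F + ∇_M F · (V + u) = 0 holds at (t, ξ) if and only if the parametrised equation ∂ₜf + uⁱ ∂ᵢf = 0 holds there. -/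

import Mathlib

open scoped RealInnerProductSpace

/-- The spatial partial derivative `∂ᵢx(t, ξ)` of a parametrised evolving surface
`x : ℝ × ℝ² → ℝ³` in the `i`-th coordinate direction. -/
noncomputable def spatialPD (x : ℝ × EuclideanSpace ℝ (Fin 2) → EuclideanSpace ℝ (Fin 3))
    (i : Fin 2) (t : ℝ) (ξ : EuclideanSpace ℝ (Fin 2)) : EuclideanSpace ℝ (Fin 3) :=
  fderiv ℝ (fun η => x (t, η)) ξ (EuclideanSpace.single i 1)

/-- The surface velocity `V(t, ξ) = ∂ₜx(t, ξ)` of a parametrised evolving surface. -/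
noncomputable def surfVel (x : ℝ × EuclideanSpace ℝ (Fin 2) → EuclideanSpace ℝ (Fin 3))
    (t : ℝ) (ξ : EuclideanSpace ℝ (Fin 2)) : EuclideanSpace ℝ (Fin 3) :=
  deriv (fun s => x (s, ξ)) t

private lemma optical_flow_aux
    (a b : ℝ) (Ω : Set (EuclideanSpace ℝ (Fin 2))) (hΩ : IsOpen Ω)
    (x : ℝ × EuclideanSpace ℝ (Fin 2) → EuclideanSpace ℝ (Fin 3))
    (hx : ContDiffOn ℝ 2 x (Set.Ioo a b ×ˢ Ω))
    (F : ℝ × EuclideanSpace ℝ (Fin 3) → ℝ) (hF : ContDiff ℝ 1 F)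
    (t : ℝ) (ht : t ∈ Set.Ioo a b) (ξ : EuclideanSpace ℝ (Fin 2)) (hξ : ξ ∈ Ω)
    (hli : LinearIndependent ℝ fun i : Fin 2 => spatialPD x i t ξ)
    (N : EuclideanSpace ℝ (Fin 3)) (hN : ‖N‖ = 1)
    (hNorth : ∀ i : Fin 2, ⟪N, spatialPD x i t ξ⟫ = 0)
    (u : Fin 2 → ℝ) :
    deriv (fun s => F (s, x (t, ξ))) t +
        ⟪gradient (fun y => F (t, y)) (x (t, ξ)), N⟫ * ⟪surfVel x t ξ, N⟫ +
        ⟪(Submodule.orthogonalProjection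
              (Submodule.span ℝ (Set.range fun i : Fin 2 => spatialPD x i t ξ))
              (gradient (fun y => F (t, y)) (x (t, ξ))) : EuclideanSpace ℝ (Fin 3)),
          surfVel x t ξ + ∑ i : Fin 2, u i • spatialPD x i t ξ⟫ =
      deriv (fun s => F (s, x (s, ξ))) t +
        ∑ i : Fin 2, u i *
          fderiv ℝ (fun η => F (t, x (t, η))) ξ (EuclideanSpace.single i 1) := by
  have hnhds : Set.Ioo a b ×ˢ Ω ∈ nhds (t, ξ) := (isOpen_Ioo.prod hΩ).mem_nhds ⟨ht, hξ⟩
  have hxd : DifferentiableAt ℝ x (t, ξ) :=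
    (hx.contDiffAt hnhds).differentiableAt (by norm_num)
  set Dx := fderiv ℝ x (t, ξ) with hDxdef
  have hDx : HasFDerivAt x Dx (t, ξ) := hxd.hasFDerivAt
  set p := x (t, ξ) with hpdef
  have hFd : DifferentiableAt ℝ F (t, p) := (hF.differentiable one_ne_zero).differentiableAt
  set DF := fderiv ℝ F (t, p) with hDFdef
  have hDF : HasFDerivAt F DF (t, p) := hFd.hasFDerivAt
  -- velocity
  have hcurve : HasDerivAt (fun s : ℝ => (s, ξ)) ((1 : ℝ), (0 : EuclideanSpace ℝ (Fin 2))) t :=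
    (hasDerivAt_id t).prodMk (hasDerivAt_const t ξ)
  have hV : HasDerivAt (fun s => x (s, ξ)) (Dx (1, 0)) t := hDx.comp_hasDerivAt t hcurve
  have hVe : surfVel x t ξ = Dx (1, 0) := hV.deriv
  -- spatial derivatives
  have hxsp : HasFDerivAt (fun η => x (t, η))
      (Dx.comp (ContinuousLinearMap.inr ℝ ℝ (EuclideanSpace ℝ (Fin 2)))) ξ :=
    hDx.comp ξ (hasFDerivAt_prodMk_right t ξ)
  have hsp : ∀ i : Fin 2, spatialPD x i t ξ = Dx (0, EuclideanSpace.single i 1) := by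
    intro i; rw [spatialPD, hxsp.fderiv]; rfl
  -- time derivative of f
  have hft : deriv (fun s => F (s, x (s, ξ))) t = DF (1, Dx (1, 0)) :=
    (hDF.comp_hasDerivAt t ((hasDerivAt_id t).prodMk hV)).deriv
  have hpt : deriv (fun s => F (s, p)) t = DF (1, 0) :=
    (hDF.comp_hasDerivAt t ((hasDerivAt_id t).prodMk (hasDerivAt_const t p))).deriv
  -- spatial derivative of f
  have hfsp : ∀ i : Fin 2, fderiv ℝ (fun η => F (t, x (t, η))) ξ (EuclideanSpace.single i 1)
      = DF (0, Dx (0, EuclideanSpace.single i 1)) := by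
    intro i
    have h2 : HasFDerivAt (fun η => F (t, x (t, η)))
        ((DF.comp (ContinuousLinearMap.inr ℝ ℝ (EuclideanSpace ℝ (Fin 3)))).comp
          (Dx.comp (ContinuousLinearMap.inr ℝ ℝ (EuclideanSpace ℝ (Fin 2))))) ξ :=
      by have := (hDF.comp p (hasFDerivAt_prodMk_right t p)).comp ξ hxsp; exact this
    rw [h2.fderiv]; rfl
  -- gradient
  set G := gradient (fun y => F (t, y)) p with hGdef
  have hGrad : ∀ v, ⟪G, v⟫ = DF (0, v) := by
    intro v
    have h1 : HasFDerivAt (fun y => F (t, y))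
        (DF.comp (ContinuousLinearMap.inr ℝ ℝ (EuclideanSpace ℝ (Fin 3)))) p :=
      hDF.comp p (hasFDerivAt_prodMk_right t p)
    rw [hGdef, gradient, h1.fderiv, InnerProductSpace.toDual_symm_apply]; rfl
  -- the span and projection
  set K := Submodule.span ℝ (Set.range fun i : Fin 2 => spatialPD x i t ξ) with hKdef
  have hNK : N ∈ Kᗮ := by
    rw [Submodule.mem_orthogonal']
    intro v hv
    induction hv using Submodule.span_induction with
    | mem v hv => obtain ⟨i, rfl⟩ := hv; exact hNorth i
    | zero => simp
    | add y z _ _ hy hz => rw [inner_add_right, hy, hz, add_zero]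
    | smul c y _ hy => rw [real_inner_smul_right, hy, mul_zero]
  have hN0 : N ≠ 0 := by intro h; rw [h, norm_zero] at hN; norm_num at hN
  have hK2 : Module.finrank ℝ K = 2 := by
    rw [hKdef, finrank_span_eq_card hli, Fintype.card_fin]
  have hKo1 : Module.finrank ℝ Kᗮ = 1 := by
    have h3 := Submodule.finrank_add_finrank_orthogonal K
    rw [hK2, finrank_euclideanSpace_fin] at h3
    omega
  have hspanN : (ℝ ∙ N) = Kᗮ := by
    apply Submodule.eq_of_le_of_finrank_le
    · rw [Submodule.span_singleton_le_iff_mem]; exact hNK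
    · rw [hKo1, finrank_span_singleton hN0]
  have hproj : ((Submodule.orthogonalProjection K G : EuclideanSpace ℝ (Fin 3)))
      = G - ⟪N, G⟫ • N := by
    show K.starProjection G = _
    have h := K.starProjection_add_starProjection_orthogonal G
    have h2 : Kᗮ.starProjection G = ⟪N, G⟫ • N := by
      simp only [← hspanN]
      rw [Submodule.starProjection_singleton, hN]
      norm_num
    rw [eq_sub_iff_add_eq, ← h2]
    exact h
  -- final computation
  have hN0' : ∀ i : Fin 2, ⟪N, Dx (0, EuclideanSpace.single i 1)⟫ = 0 := fun i => by
    rw [← hsp]; exact hNorth i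
  have hsplit : DF (1, Dx (1, 0)) = DF (1, 0) + DF (0, Dx (1, 0)) := by
    rw [← map_add]; norm_num
  have hDFsmul : ∀ (c : ℝ) (v : EuclideanSpace ℝ (Fin 3)),
      DF ((0 : ℝ), c • v) = c * DF (0, v) := by
    intro c v
    have h4 : ((0 : ℝ), c • v) = c • ((0 : ℝ), v) := by simp
    rw [h4, map_smul]
    rfl
  rw [hVe, hproj, hft, hpt]
  simp only [hsp, hfsp, Fin.sum_univ_two, inner_sub_left, inner_add_right,
    real_inner_smul_left, real_inner_smul_right, hGrad, hDFsmul, hN0',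
    real_inner_comm (Dx (1, 0)) N, hsplit]
  rw [real_inner_comm G N, hGrad]
  ring


/-- **The generalised optical flow equation in local coordinates.** For a `C²` parametrised
evolving surface `x : I × Ω → ℝ³`, a `C¹` (normally constant) extension `F̂ : ℝ × ℝ³ → ℝ` of
the data with `f(t, ξ) := F̂(t, x(t, ξ))`, a unit normal `N` at `(t, ξ)`, and a tangent vector
`u = ∑ᵢ uⁱ ∂ᵢx(t, ξ)`, the quantity `d_t^N F + ∇_M F · (V + u)` equals `∂ₜf + ∑ᵢ uⁱ ∂ᵢf`;
in particular the generalised optical flow equation holds iff the parametrised one does. -/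
theorem generalised_optical_flow_equation_parametrised
    (a b : ℝ) (Ω : Set (EuclideanSpace ℝ (Fin 2))) (hΩ : IsOpen Ω)
    (x : ℝ × EuclideanSpace ℝ (Fin 2) → EuclideanSpace ℝ (Fin 3))
    (hx : ContDiffOn ℝ 2 x (Set.Ioo a b ×ˢ Ω))
    (F : ℝ × EuclideanSpace ℝ (Fin 3) → ℝ) (hF : ContDiff ℝ 1 F)
    (t : ℝ) (ht : t ∈ Set.Ioo a b) (ξ : EuclideanSpace ℝ (Fin 2)) (hξ : ξ ∈ Ω)
    (hli : LinearIndependent ℝ fun i : Fin 2 => spatialPD x i t ξ)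
    (N : EuclideanSpace ℝ (Fin 3)) (hN : ‖N‖ = 1)
    (hNorth : ∀ i : Fin 2, ⟪N, spatialPD x i t ξ⟫ = 0)
    (u : Fin 2 → ℝ) :
    deriv (fun s => F (s, x (t, ξ))) t +
        ⟪gradient (fun y => F (t, y)) (x (t, ξ)), N⟫ * ⟪surfVel x t ξ, N⟫ +
        ⟪(Submodule.orthogonalProjection
              (Submodule.span ℝ (Set.range fun i : Fin 2 => spatialPD x i t ξ))
              (gradient (fun y => F (t, y)) (x (t, ξ))) : EuclideanSpace ℝ (Fin 3)),
          surfVel x t ξ + ∑ i : Fin 2, u i • spatialPD x i t ξ⟫ =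
      deriv (fun s => F (s, x (s, ξ))) t +
        ∑ i : Fin 2, u i *
          fderiv ℝ (fun η => F (t, x (t, η))) ξ (EuclideanSpace.single i 1) ∧
    ((deriv (fun s => F (s, x (t, ξ))) t +
        ⟪gradient (fun y => F (t, y)) (x (t, ξ)), N⟫ * ⟪surfVel x t ξ, N⟫ +
        ⟪(Submodule.orthogonalProjection
              (Submodule.span ℝ (Set.range fun i : Fin 2 => spatialPD x i t ξ))
              (gradient (fun y => F (t, y)) (x (t, ξ))) : EuclideanSpace ℝ (Fin 3)),
          surfVel x t ξ + ∑ i : Fin 2, u i • spatialPD x i t ξ⟫ = 0) ↔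
      (deriv (fun s => F (s, x (s, ξ))) t +
        ∑ i : Fin 2, u i *
          fderiv ℝ (fun η => F (t, x (t, η))) ξ (EuclideanSpace.single i 1) = 0)) := by
  have key := optical_flow_aux a b Ω hΩ x hx F hF t ht ξ hξ hli N hN hNorth u
  exact ⟨key, by rw [key]⟩
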